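/- Let q be a prime power and let V be a valuation ring that is an F_q[T]-algebra, with field of fractions K (so the image of the structure map θ : F_q[T] → K lies in V). Let d ≥ 1 and let φ_T(z) = θ(T)·z + Σ_{i=1}^{d} a_i·z^{q^i} ∈ K[z] with a_d ≠ 0 (so φ_T defines a Drinfeld F_q[T]-module of rank d over K with trivialized line bundle). Then there exist a finite separable field extension K' of K, a valuation ring V' of K' with V' ∩ K = V, and an element c ∈ (K')^× such that c^{q^i − 1}·a_i ∈ V' for all 1 ≤ i ≤ d and c^{q^j − 1}·a_j ∈ (V')^× for some 1 ≤ j ≤ d (i.e., the conjugated module z ↦ c^{−1}·φ_T(c·z) has coefficients in V' and some coefficient of degree ≥ q is a unit of V', so it extends to a generalized Drinfeld module over V'). -/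
import Mathlib


noncomputable section

open scoped IntermediateField

/-- In a valuation subring, if a power of an element lies in the subring, so does the
element itself. -/
lemma aux_pow_mem_valuationSubring {K : Type*} [Field K] (V : ValuationSubring K)
    {x : K} {n : ℕ} (hn : n ≠ 0) (h : x ^ n ∈ V) : x ∈ V := by
  rw [← V.valuation_le_one_iff] at h ⊢
  rw [map_pow] at h
  exact le_of_pow_le_pow_left₀ hn zero_le' (by rwa [one_pow])

/-- Let `V` be a valuation ring of a field `K` which is an
`F_q[T]`-algebra (with structure map `θ` landing in `V`), and let
`φ_T(z) = θ(T)·z + Σ_{i=1}^d a_i·z^{q^i}` with `a_d ≠ 0` define a Drinfeld module of rank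
`d ≥ 1` over `K`.  Then there are a finite separable extension `K'` of `K`, a valuation
ring `V'` of `K'` with `V' ∩ K = V`, and `c ∈ (K')^×` such that
`c^{q^i−1}·a_i ∈ V'` for all `1 ≤ i ≤ d` and `c^{q^j−1}·a_j` is a unit of `V'` for some
`1 ≤ j ≤ d`. -/
theorem statement19 (Fq : Type) [Field Fq] [Fintype Fq]
    (K : Type) [Field K] [Algebra (Polynomial Fq) K]
    (V : ValuationSubring K)
    (hθ : ∀ b : Polynomial Fq, algebraMap (Polynomial Fq) K b ∈ V)
    (d : ℕ) (hd : 1 ≤ d) (a : ℕ → K) (had : a d ≠ 0) :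
    ∃ K' : IntermediateField K (AlgebraicClosure K),
      FiniteDimensional K ↥K' ∧ Algebra.IsSeparable K ↥K' ∧
      ∃ V' : ValuationSubring ↥K',
        (∀ x : K, algebraMap K ↥K' x ∈ V' ↔ x ∈ V) ∧
        ∃ c : ↥K', c ≠ 0 ∧
          (∀ i : ℕ, 1 ≤ i → i ≤ d →
            c ^ ((Fintype.card Fq) ^ i - 1) * algebraMap K ↥K' (a i) ∈ V') ∧
          ∃ j : ℕ, 1 ≤ j ∧ j ≤ d ∧
            c ^ ((Fintype.card Fq) ^ j - 1) * algebraMap K ↥K' (a j) ≠ 0 ∧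
            c ^ ((Fintype.card Fq) ^ j - 1) * algebraMap K ↥K' (a j) ∈ V' ∧
            (c ^ ((Fintype.card Fq) ^ j - 1) * algebraMap K ↥K' (a j))⁻¹ ∈ V' := by
  classical
  set q := Fintype.card Fq with hqdef
  have hq2 : 2 ≤ q := Fintype.one_lt_card
  -- characteristic considerations
  obtain ⟨p, hp⟩ := CharP.exists Fq
  have hK : CharP K p :=
    charP_of_injective_ringHom
      (((algebraMap (Polynomial Fq) K).comp Polynomial.C).injective) p
  obtain ⟨n, hpp, hqpn⟩ := FiniteField.card Fq p
  have hqK : (q : K) = 0 := by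
    rw [hqdef, hqpn]
    push_cast
    rw [CharP.cast_eq_zero K p]
    exact zero_pow n.pos.ne'
  have hcast : ∀ m : ℕ, 1 ≤ m → ((q ^ m - 1 : ℕ) : K) ≠ 0 := by
    intro m hm
    have h1 : 1 ≤ q ^ m := Nat.one_le_pow _ _ (by omega)
    rw [Nat.cast_sub h1, Nat.cast_pow, hqK, zero_pow (by omega), Nat.cast_one, zero_sub]
    simpa using (one_ne_zero (α := K))
  -- choice of the index j
  set v := V.valuation with hv
  set S : Finset ℕ := (Finset.Icc 1 d).filter (fun i => a i ≠ 0) with hS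
  have hdS : d ∈ S := by
    simp only [hS, Finset.mem_filter, Finset.mem_Icc]
    exact ⟨⟨hd, le_rfl⟩, had⟩
  set e : ℕ → ℕ := fun i => ∏ k ∈ (Finset.Icc 1 d).erase i, (q ^ k - 1) with he
  obtain ⟨j, hjS, hjmax⟩ := S.exists_max_image (fun i => v (a i) ^ e i) ⟨d, hdS⟩
  have hjI : j ∈ Finset.Icc 1 d := (Finset.mem_filter.mp hjS).1
  have haj : a j ≠ 0 := (Finset.mem_filter.mp hjS).2
  have hj1 : 1 ≤ j := (Finset.mem_Icc.mp hjI).1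
  have hjd : j ≤ d := (Finset.mem_Icc.mp hjI).2
  set M : ℕ := ∏ k ∈ Finset.Icc 1 d, (q ^ k - 1) with hM
  have hfac : ∀ k ∈ Finset.Icc 1 d, q ^ k - 1 ≠ 0 := by
    intro k hk
    have hk1 : 1 ≤ k := (Finset.mem_Icc.mp hk).1
    have : 2 ≤ q ^ k := le_trans hq2 (Nat.le_self_pow (by omega) q)
    omega
  have hMne : M ≠ 0 := Finset.prod_ne_zero_iff.mpr hfac
  have hEM : ∀ i ∈ Finset.Icc 1 d, e i * (q ^ i - 1) = M := by
    intro i hi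
    exact Finset.prod_erase_mul _ _ hi
  -- the key valuation inequality
  have hkey : ∀ i ∈ S, v (a i) ^ (q ^ j - 1) ≤ v (a j) ^ (q ^ i - 1) := by
    intro i hiS
    have hiI : i ∈ Finset.Icc 1 d := (Finset.mem_filter.mp hiS).1
    have h := hjmax i hiS
    have h2 := pow_le_pow_left₀ zero_le' h ((q ^ i - 1) * (q ^ j - 1))
    rw [← pow_mul, ← pow_mul] at h2
    have e1 : e i * ((q ^ i - 1) * (q ^ j - 1)) = (q ^ j - 1) * M := by
      rw [← hEM i hiI]; ring
    have e2 : e j * ((q ^ i - 1) * (q ^ j - 1)) = (q ^ i - 1) * M := by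
      rw [← hEM j hjI]; ring
    rw [e1, e2, pow_mul, pow_mul] at h2
    exact le_of_pow_le_pow_left₀ hMne zero_le' h2
  -- the element c
  set N : ℕ := q ^ j - 1 with hNdef
  have hN : N ≠ 0 := hfac j hjI
  have hNK : ((N : ℕ) : K) ≠ 0 := hcast j hj1
  obtain ⟨c₀, hc₀⟩ := IsAlgClosed.exists_pow_nat_eq
    (algebraMap K (AlgebraicClosure K) (a j)⁻¹) (Nat.pos_of_ne_zero hN)
  have hc₀root : (Polynomial.aeval c₀) (Polynomial.X ^ N - Polynomial.C (a j)⁻¹) = 0 := by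
    simp [hc₀]
  have hint : IsIntegral K c₀ :=
    ⟨Polynomial.X ^ N - Polynomial.C (a j)⁻¹,
      Polynomial.monic_X_pow_sub_C _ hN, by simpa [Polynomial.aeval_def] using hc₀root⟩
  have hsepP : (Polynomial.X ^ N - Polynomial.C (a j)⁻¹).Separable :=
    Polynomial.separable_X_pow_sub_C _ hNK (inv_ne_zero haj)
  have hsep : IsSeparable K c₀ :=
    hsepP.of_dvd (minpoly.dvd K c₀ hc₀root)
  refine ⟨K⟮c₀⟯, IntermediateField.adjoin.finiteDimensional hint,
    (IntermediateField.isSeparable_adjoin_simple_iff_isSeparable K (AlgebraicClosure K)).mpr hsep, ?_⟩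
  -- the valuation ring V'
  obtain ⟨V', hmem, hloc⟩ :=
    IsLocalRing.exists_factor_valuationRing ((algebraMap K K⟮c₀⟯).comp V.subtype)
  have compat : ∀ x : K, algebraMap K K⟮c₀⟯ x ∈ V' ↔ x ∈ V := by
    intro x
    constructor
    · intro hx
      by_contra hxV
      have hx0 : x ≠ 0 := by rintro rfl; exact hxV (zero_mem V)
      have hxinv : x⁻¹ ∈ V := (V.mem_or_inv_mem x).resolve_left hxV
      have hu : IsUnit ((((algebraMap K K⟮c₀⟯).comp V.subtype).codRestrict
          V'.toSubring hmem) ⟨x⁻¹, hxinv⟩) := by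
        rw [isUnit_iff_exists_inv]
        refine ⟨⟨algebraMap K K⟮c₀⟯ x, hx⟩, ?_⟩
        apply Subtype.ext
        show algebraMap K K⟮c₀⟯ x⁻¹ * algebraMap K K⟮c₀⟯ x = 1
        rw [← map_mul, inv_mul_cancel₀ hx0, map_one]
      have hu2 : IsUnit (⟨x⁻¹, hxinv⟩ : V) := hloc.map_nonunit _ hu
      obtain ⟨b, hb⟩ := isUnit_iff_exists_inv.mp hu2
      have hb1 : x⁻¹ * (b : K) = 1 := congrArg Subtype.val hb
      have hbx : (b : K) = x := by field_simp at hb1; exact hb1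
      exact hxV (hbx ▸ b.2)
    · intro hx
      exact hmem ⟨x, hx⟩
  refine ⟨V', compat, ?_⟩
  -- the element c inside K⟮c₀⟯
  set c : K⟮c₀⟯ := IntermediateField.AdjoinSimple.gen K c₀ with hc
  have hcN : c ^ N = algebraMap K K⟮c₀⟯ (a j)⁻¹ := by
    apply Subtype.ext
    rw [SubmonoidClass.coe_pow, IntermediateField.coe_algebraMap_apply]
    exact hc₀
  have hc0 : c ≠ 0 := by
    intro h
    have : (algebraMap K K⟮c₀⟯) (a j)⁻¹ = 0 := by
      rw [← hcN, h, zero_pow hN]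
    exact inv_ne_zero haj ((map_eq_zero _).mp this)
  refine ⟨c, hc0, ?_, ?_⟩
  · -- all coefficients land in V'
    intro i hi1 hid
    by_cases hai : a i = 0
    · simp only [hai, map_zero, mul_zero]
      exact zero_mem V'
    have hiS : i ∈ S := by
      simp only [hS, Finset.mem_filter, Finset.mem_Icc]
      exact ⟨⟨hi1, hid⟩, hai⟩
    apply aux_pow_mem_valuationSubring V' hN
    have hpow : (c ^ (q ^ i - 1) * algebraMap K K⟮c₀⟯ (a i)) ^ N =
        algebraMap K K⟮c₀⟯ ((a j)⁻¹ ^ (q ^ i - 1) * a i ^ N) := by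
      rw [mul_pow, ← pow_mul, mul_comm (q ^ i - 1) N, pow_mul, hcN,
        ← map_pow, ← map_pow, ← map_mul]
    rw [hpow, compat, ← V.valuation_le_one_iff, map_mul, map_pow, map_pow, map_inv₀]
    have hvaj : v (a j) ^ (q ^ i - 1) ≠ 0 :=
      pow_ne_zero _ ((Valuation.ne_zero_iff v).mpr haj)
    calc (v (a j))⁻¹ ^ (q ^ i - 1) * v (a i) ^ N
        = v (a i) ^ N * (v (a j) ^ (q ^ i - 1))⁻¹ := by rw [mul_comm, inv_pow]
      _ ≤ v (a j) ^ (q ^ i - 1) * (v (a j) ^ (q ^ i - 1))⁻¹ :=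
          mul_le_mul_left (hkey i hiS) _
      _ = 1 := mul_inv_cancel₀ hvaj
  · -- the unit coefficient
    have heq : c ^ (q ^ j - 1) * algebraMap K K⟮c₀⟯ (a j) = 1 := by
      rw [show q ^ j - 1 = N from rfl, hcN, ← map_mul, inv_mul_cancel₀ haj, map_one]
    exact ⟨j, hj1, hjd, by rw [heq]; exact one_ne_zero,
      by rw [heq]; exact one_mem V', by rw [heq, inv_one]; exact one_mem V'⟩
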